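/- Let k ≥ 1, let 0 ≤ m ≤ k, and let ε ∈ {1,−1}. Let M and N be free ℤ-modules of rank k, let S : N × M → ℤ be a ℤ-bilinear perfect pairing (i.e., the induced maps N → Hom(M,ℤ) and M → Hom(N,ℤ) are isomorphisms), and let p : M → N be a ℤ-linear map satisfying S(p(a), b) = ε·S(p(b), a) for all a, b ∈ M. Let α₁,…,α_k be a ℤ-basis of N such that: (i) for each i with 1 ≤ i ≤ m there is a nonzero integer qᵢ with qᵢ·αᵢ in the image of p; and (ii) every element of the image of p has a nonzero integer multiple lying in the ℤ-span of α₁,…,α_m. Let δ₁,…,δ_k be the basis of M dual to α₁,…,α_k under S, i.e., S(αᵢ, δⱼ) = 1 if i = j and 0 otherwise. Then the images of δ₁,…,δ_m under the quotient map M → M/ker(p) form a ℤ-basis of M/ker(p); in particular M/ker(p) is free of rank m. -/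

import Mathlib

/-- Let `S : N × M → ℤ` be a perfect pairing of free `ℤ`-modules of rank `k`, and let
`p : M → N` satisfy `S(p a, b) = ε · S(p b, a)` with `ε = ±1`. Given a basis `α` of `N`
such that each `αᵢ` (`i < m`) has a nonzero multiple in the image of `p`, and every
element of the image of `p` has a nonzero multiple in the span of `α₁, …, α_m`, the
images under `M → M ⧸ ker p` of the first `m` elements of the basis `δ` of `M` dual to
`α` form a `ℤ`-basis of `M ⧸ ker p`. -/
theorem dual_basis_of_coimage (k m : ℕ) (hk : 1 ≤ k) (hm : m ≤ k)
    (ε : ℤ) (hε : ε = 1 ∨ ε = -1)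
    (M N : Type) [AddCommGroup M] [Module ℤ M] [AddCommGroup N] [Module ℤ N]
    (βM : Module.Basis (Fin k) ℤ M)
    (S : N →ₗ[ℤ] M →ₗ[ℤ] ℤ)
    (hS : Function.Bijective S) (hS' : Function.Bijective S.flip)
    (p : M →ₗ[ℤ] N)
    (hsym : ∀ a b : M, S (p a) b = ε * S (p b) a)
    (α : Module.Basis (Fin k) ℤ N)
    (hmult : ∀ i : Fin k, (i : ℕ) < m → ∃ q : ℤ, q ≠ 0 ∧ q • α i ∈ LinearMap.range p)
    (hspan : ∀ x ∈ LinearMap.range p, ∃ q : ℤ, q ≠ 0 ∧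
      q • x ∈ Submodule.span ℤ (Set.range fun i : Fin m => α (Fin.castLE hm i)))
    (δ : Fin k → M)
    (hδ : ∀ i j : Fin k, S (α i) (δ j) = if i = j then 1 else 0) :
    ∃ b : Module.Basis (Fin m) ℤ (M ⧸ LinearMap.ker p),
      ∀ i : Fin m, b i = (LinearMap.ker p).mkQ (δ (Fin.castLE hm i)) := by
  classical
  -- injectivity via the basis α
  have hA : ∀ x : M, (∀ i : Fin k, S (α i) x = 0) → x = 0 := by
    intro x hx
    have h0 : S.flip x = 0 := α.ext fun i => by simpa using hx i
    exact hS'.injective (h0.trans (map_zero S.flip).symm)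
  -- kernel characterization
  have hker : ∀ x : M, x ∈ LinearMap.ker p ↔ ∀ b : M, S (p b) x = 0 := by
    intro x
    constructor
    · intro hx b
      have := hsym b x
      rw [LinearMap.mem_ker.mp hx] at this
      simpa using this
    · intro h
      have h1 : S (p x) = 0 := by
        apply LinearMap.ext
        intro b
        rw [hsym x b, h b, mul_zero, LinearMap.zero_apply]
      exact LinearMap.mem_ker.mpr (hS.injective (h1.trans (map_zero S).symm))
  -- elements of the span of the first m α's pair to zero with δ j for j ≥ m
  have hpair : ∀ (j : Fin k), m ≤ (j : ℕ) →
      ∀ y ∈ Submodule.span ℤ (Set.range fun i : Fin m => α (Fin.castLE hm i)),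
      S y (δ j) = 0 := by
    intro j hj y hy
    induction hy using Submodule.span_induction with
    | mem y hy =>
      obtain ⟨i, rfl⟩ := hy
      rw [hδ]
      have hne : Fin.castLE hm i ≠ j := by
        intro h
        have h2 : ((Fin.castLE hm i : Fin k) : ℕ) = (j : ℕ) := congrArg Fin.val h
        simp at h2
        omega
      simp [hne]
    | zero => simp
    | add y z _ _ hy hz => simp [hy, hz]
    | smul c y _ hy => simp [hy]
  -- δ j is in the kernel for j ≥ m
  have hkerδ : ∀ j : Fin k, m ≤ (j : ℕ) → δ j ∈ LinearMap.ker p := by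
    intro j hj
    rw [hker]
    intro b
    obtain ⟨q, hq, hqs⟩ := hspan (p b) ⟨b, rfl⟩
    have := hpair j hj _ hqs
    simp only [map_zsmul, LinearMap.smul_apply, smul_eq_mul] at this
    rcases mul_eq_zero.mp this with h | h
    · exact absurd h hq
    · exact h
  -- every x is a combination of the δ's
  have hrep : ∀ x : M, x = ∑ j : Fin k, S (α j) x • δ j := by
    intro x
    have : ∀ i : Fin k, S (α i) (x - ∑ j : Fin k, S (α j) x • δ j) = 0 := by
      intro i
      rw [map_sub, map_sum]
      simp [hδ, mul_ite]
    exact sub_eq_zero.mp (hA _ this)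
  -- independence
  have hli : LinearIndependent ℤ
      (fun i : Fin m => (LinearMap.ker p).mkQ (δ (Fin.castLE hm i))) := by
    rw [Fintype.linearIndependent_iff]
    intro c hc i
    have hmem : (∑ i : Fin m, c i • δ (Fin.castLE hm i)) ∈ LinearMap.ker p := by
      have h0 : (LinearMap.ker p).mkQ (∑ i : Fin m, c i • δ (Fin.castLE hm i)) = 0 := by
        rw [map_sum]; simp only [map_zsmul]; exact hc
      rwa [Submodule.mkQ_apply, Submodule.Quotient.mk_eq_zero] at h0
    obtain ⟨q, hq, a, ha⟩ := hmult (Fin.castLE hm i) (by simpa using i.isLt)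
    have h1 : S (p a) (∑ j : Fin m, c j • δ (Fin.castLE hm j)) = 0 := by
      rw [hsym, LinearMap.mem_ker.mp hmem]
      simp only [map_zero, LinearMap.zero_apply, mul_zero]
    rw [ha] at h1
    have h2 : S (q • α (Fin.castLE hm i)) (∑ j : Fin m, c j • δ (Fin.castLE hm j))
        = q * c i := by
      simp only [map_zsmul, LinearMap.smul_apply, smul_eq_mul]
      congr 1
      rw [map_sum]
      simp only [map_zsmul, smul_eq_mul, hδ]
      rw [Finset.sum_eq_single i]
      · simp
      · intro j _ hji
        have hne : Fin.castLE hm i ≠ Fin.castLE hm j := by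
          intro h
          exact hji (Fin.castLE_injective hm h).symm
        simp [hne]
      · intro h; exact absurd (Finset.mem_univ i) h
    rw [h2] at h1
    rcases mul_eq_zero.mp h1 with h | h
    · exact absurd h hq
    · exact h
  -- spanning
  have hsp : ⊤ ≤ Submodule.span ℤ
      (Set.range fun i : Fin m => (LinearMap.ker p).mkQ (δ (Fin.castLE hm i))) := by
    rintro y -
    obtain ⟨x, rfl⟩ := Submodule.mkQ_surjective (LinearMap.ker p) y
    rw [hrep x, map_sum]
    apply Submodule.sum_mem
    intro j _
    simp only [map_zsmul]
    by_cases hj : (j : ℕ) < m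
    · apply Submodule.smul_mem
      apply Submodule.subset_span
      have hcj : Fin.castLE hm ⟨(j : ℕ), hj⟩ = j := Fin.ext rfl
      exact ⟨⟨(j : ℕ), hj⟩, congrArg (fun y => (LinearMap.ker p).mkQ (δ y)) hcj⟩
    · have : (LinearMap.ker p).mkQ (δ j) = 0 := by
        rw [Submodule.mkQ_apply, Submodule.Quotient.mk_eq_zero]
        exact hkerδ j (le_of_not_gt hj)
      rw [this]
      exact zsmul_mem (Submodule.zero_mem _) _
  exact ⟨Module.Basis.mk hli hsp, fun i => Module.Basis.mk_apply hli hsp i⟩
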